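/- Fix integers d ≥ 1, J ≥ 1, δ ≥ 1 and L ≥ 0, and let A and B be real matrices indexed by Λ × Λ. Assume (i) every column of A has at most L non-zero entries, and (ii) B[(j,e,l),(j',e',l')] ≠ 0 implies S(j,l) ∩ S(j',l') ≠ ∅. Then the number of non-zero entries of the product AB is at most 2·(2^d − 1)·2^d·δ^d·L·J·2^{dJ}, i.e. at most (2(2^d−1)2^d/d)·δ^d·L·N·log₂ N with N = 2^{dJ}. -/

import Mathlib

/-- The support box `S(j,l)` at scale `j` and translation `l`, for `J` scales and a mother
wavelet supported on a hypercube of sidelength `2δ`. -/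
def suppBox (d J δ j : ℕ) (l : Fin d → ℤ) : Set (Fin d → ℤ) :=
  {x | ∀ i, -((2 ^ (J - j) - 1) * ((δ : ℤ) - 1)) + 2 ^ (J - j) * l i ≤ x i ∧
        x i ≤ (2 ^ (J - j) - 1) * (δ : ℤ) + 2 ^ (J - j) * l i}

/-- The set `Λ` of wavelet indices `(j,e,l)` with `0 ≤ j ≤ J-1`, `e ∈ {0,1}^d ∖ {0}` and
`l ∈ T_j = {0,…,2^j-1}^d`, realized as a subtype. -/
def Lam (d J : ℕ) : Type :=
  {p : Fin J × (Fin d → Bool) × (Fin d → Fin (2 ^ J)) //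
    p.2.1 ≠ (fun _ => false) ∧ ∀ i, (p.2.2 i : ℕ) < 2 ^ (p.1 : ℕ)}

noncomputable instance (d J : ℕ) : Fintype (Lam d J) := by
  unfold Lam; exact Subtype.fintype _

namespace SparseAux

open Finset

def loI (J δ j : ℕ) (a : ℤ) : ℤ := -((2 ^ (J - j) - 1) * ((δ : ℤ) - 1)) + 2 ^ (J - j) * a

def hiI (J δ j : ℕ) (a : ℤ) : ℤ := (2 ^ (J - j) - 1) * (δ : ℤ) + 2 ^ (J - j) * a

def pairFinset (J δ j j' : ℕ) : Finset (Fin (2 ^ J) × Fin (2 ^ J)) :=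
  Finset.univ.filter fun ab =>
    ((ab.1 : ℕ) < 2 ^ j ∧ (ab.2 : ℕ) < 2 ^ j') ∧
    loI J δ j ((ab.1 : ℕ) : ℤ) ≤ hiI J δ j' ((ab.2 : ℕ) : ℤ) ∧
    loI J δ j' ((ab.2 : ℕ) : ℤ) ≤ hiI J δ j ((ab.1 : ℕ) : ℤ)

noncomputable def xx (J j : ℕ) : ℝ := 2 ^ j / 2 ^ J

noncomputable def ff (J j j' : ℕ) : ℝ := xx J j + xx J j' - 2 * xx J j * xx J j'

noncomputable def AA (d J r : ℕ) : ℝ := ∑ j ∈ Finset.range J, xx J j ^ r * (1 - xx J j) ^ (d - r)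

lemma count_window (n : ℕ) (m c₁ c₂ : ℤ) (hm : 0 < m) (hc : c₁ ≤ c₂) :
    ((Finset.univ.filter fun b : Fin n => c₁ ≤ m * (b : ℤ) ∧ m * (b : ℤ) ≤ c₂).card : ℤ) * m
      ≤ c₂ - c₁ + m := by
  set S := Finset.univ.filter fun b : Fin n => c₁ ≤ m * (b : ℤ) ∧ m * (b : ℤ) ≤ c₂ with hS
  have hsub : S.card ≤ (Finset.Icc (-((-c₁) / m)) (c₂ / m)).card := by
    refine Finset.card_le_card_of_injOn (fun b => ((b : ℕ) : ℤ)) ?_ ?_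
    · intro b hb
      rw [hS, Finset.mem_coe, Finset.mem_filter] at hb
      obtain ⟨-, h1, h2⟩ := hb
      simp only [Finset.mem_coe, Finset.mem_Icc]
      constructor
      · rw [neg_le]
        rw [Int.le_ediv_iff_mul_le hm]
        linarith
      · rw [Int.le_ediv_iff_mul_le hm]
        linarith
    · intro a _ b _ hab
      simp only at hab
      exact Fin.val_injective (by exact_mod_cast hab)
  rcases le_or_gt (c₂ / m + 1 - (-((-c₁) / m))) 0 with h | h
  · have : (Finset.Icc (-((-c₁) / m)) (c₂ / m)).card = 0 := by
      rw [Int.card_Icc]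
      omega
    have hS0 : S.card = 0 := by omega
    rw [hS0]
    simp only [Nat.cast_zero, zero_mul]
    linarith
  · have hcard : ((Finset.Icc (-((-c₁) / m)) (c₂ / m)).card : ℤ) = c₂ / m + 1 - (-((-c₁) / m)) := by
      rw [Int.card_Icc]
      omega
    have h1 : (S.card : ℤ) ≤ c₂ / m + 1 + (-c₁) / m := by
      have := hsub
      have : (S.card : ℤ) ≤ ((Finset.Icc (-((-c₁) / m)) (c₂ / m)).card : ℤ) := by exact_mod_cast hsub
      omega
    have h2 : c₂ / m * m ≤ c₂ := Int.ediv_mul_le c₂ (ne_of_gt hm)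
    have h3 : (-c₁) / m * m ≤ -c₁ := Int.ediv_mul_le (-c₁) (ne_of_gt hm)
    calc (S.card : ℤ) * m ≤ (c₂ / m + 1 + (-c₁) / m) * m := by
          apply mul_le_mul_of_nonneg_right h1 (le_of_lt hm)
      _ = c₂ / m * m + (-c₁) / m * m + m := by ring
      _ ≤ c₂ - c₁ + m := by linarith

lemma pair_count_int (J δ j j' : ℕ) (hδ : 1 ≤ δ) (hjj' : j ≤ j') (hj' : j' < J) :
    ((pairFinset J δ j j').card : ℤ) * 2 ^ (J - j') ≤
      2 ^ j * ((2 * (δ : ℤ) - 1) * (2 ^ (J - j) + 2 ^ (J - j') - 2) + 2 ^ (J - j')) := by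
  classical
  set m : ℤ := 2 ^ (J - j) with hm_def
  set m' : ℤ := 2 ^ (J - j') with hm'_def
  have hm : (1:ℤ) ≤ m := one_le_pow₀ (by norm_num)
  have hm' : (0:ℤ) < m' := by positivity
  set W : ℤ := (2 * (δ : ℤ) - 1) * (m + m' - 2) with hW_def
  have hW : 0 ≤ W := by
    apply mul_nonneg
    · have : (1:ℤ) ≤ (δ:ℤ) := by exact_mod_cast hδ
      linarith
    · have : (1:ℤ) ≤ m' := one_le_pow₀ (by norm_num)
      linarith
  -- fiberwise count over first coordinate
  set t : Finset (Fin (2 ^ J)) := Finset.univ.filter fun a => (a : ℕ) < 2 ^ j with ht_def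
  have hcard : (pairFinset J δ j j').card =
      ∑ a ∈ t, ((pairFinset J δ j j').filter fun ab => ab.1 = a).card := by
    apply Finset.card_eq_sum_card_fiberwise
    intro p hp
    rw [pairFinset, Finset.mem_coe, Finset.mem_filter] at hp
    rw [ht_def, Finset.mem_coe, Finset.mem_filter]
    exact ⟨Finset.mem_univ _, hp.2.1.1⟩
  -- per fiber bound
  have hfiber : ∀ a ∈ t, (((pairFinset J δ j j').filter fun ab => ab.1 = a).card : ℤ) * m'
      ≤ W + m' := by
    intro a _
    set c₁ : ℤ := m * (a : ℕ) - (m - 1) * ((δ:ℤ) - 1) - (m' - 1) * (δ:ℤ) with hc₁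
    set c₂ : ℤ := m * (a : ℕ) + (m - 1) * (δ:ℤ) + (m' - 1) * ((δ:ℤ) - 1) with hc₂
    have hcc : c₂ - c₁ = W := by rw [hc₁, hc₂, hW_def]; ring
    have hcle : c₁ ≤ c₂ := by linarith
    have hsub : (((pairFinset J δ j j').filter fun ab => ab.1 = a).card : ℤ) ≤
        ((Finset.univ.filter fun b : Fin (2 ^ J) => c₁ ≤ m' * (b : ℤ) ∧ m' * (b : ℤ) ≤ c₂).card : ℤ) := by
      have := Finset.card_le_card_of_injOn (fun ab : Fin (2^J) × Fin (2^J) => ab.2)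
        (s := (pairFinset J δ j j').filter fun ab => ab.1 = a)
        (t := Finset.univ.filter fun b : Fin (2 ^ J) => c₁ ≤ m' * (b : ℤ) ∧ m' * (b : ℤ) ≤ c₂)
        ?_ ?_
      · exact_mod_cast this
      · intro ab hab
        rw [Finset.mem_coe, Finset.mem_filter, pairFinset, Finset.mem_filter] at hab
        obtain ⟨⟨-, -, h1, h2⟩, hfst⟩ := hab
        rw [loI, hiI] at h1 h2
        rw [Finset.mem_coe, Finset.mem_filter]
        refine ⟨Finset.mem_univ _, ?_, ?_⟩
        · rw [hfst] at h1 h2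
          rw [← hm'_def] at h1 h2
          show c₁ ≤ m' * ((ab.2 : ℕ) : ℤ)
          rw [hc₁]
          linarith
        · rw [hfst] at h1 h2
          rw [← hm'_def] at h1 h2
          show m' * ((ab.2 : ℕ) : ℤ) ≤ c₂
          rw [hc₂]
          linarith
      · intro p hp q hq hpq
        rw [Finset.mem_coe, Finset.mem_filter] at hp hq
        simp only at hpq
        exact Prod.ext (hp.2.trans hq.2.symm) hpq
    calc (((pairFinset J δ j j').filter fun ab => ab.1 = a).card : ℤ) * m'
        ≤ ((Finset.univ.filter fun b : Fin (2 ^ J) => c₁ ≤ m' * (b : ℤ) ∧ m' * (b : ℤ) ≤ c₂).card : ℤ) * m' := by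
          apply mul_le_mul_of_nonneg_right hsub (le_of_lt hm')
      _ ≤ c₂ - c₁ + m' := count_window _ _ _ _ hm' hcle
      _ = W + m' := by rw [hcc]
  -- card t ≤ 2^j
  have htcard : (t.card : ℤ) ≤ 2 ^ j := by
    have : t.card ≤ (Finset.range (2 ^ j)).card := by
      refine Finset.card_le_card_of_injOn (fun a => (a : ℕ)) ?_ ?_
      · intro a ha
        rw [ht_def, Finset.mem_coe, Finset.mem_filter] at ha
        exact Finset.mem_range.mpr ha.2
      · intro a _ b _ hab
        exact Fin.val_injective hab
    rw [Finset.card_range] at this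
    exact_mod_cast this
  -- combine
  have hWm' : 0 ≤ W + m' := by linarith
  calc ((pairFinset J δ j j').card : ℤ) * m'
      = ∑ a ∈ t, (((pairFinset J δ j j').filter fun ab => ab.1 = a).card : ℤ) * m' := by
        rw [hcard]; push_cast; rw [Finset.sum_mul]
    _ ≤ ∑ _a ∈ t, (W + m') := Finset.sum_le_sum hfiber
    _ = (t.card : ℤ) * (W + m') := by rw [Finset.sum_const, nsmul_eq_mul]
    _ ≤ 2 ^ j * (W + m') := mul_le_mul_of_nonneg_right htcard hWm'

lemma pairFinset_swap_card (J δ j j' : ℕ) :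
    (pairFinset J δ j j').card = (pairFinset J δ j' j).card := by
  apply Finset.card_bij (fun ab _ => Prod.swap ab)
  · intro ab hab
    rw [pairFinset, Finset.mem_filter] at hab ⊢
    obtain ⟨-, ⟨hb1, hb2⟩, hb3, hb4⟩ := hab
    exact ⟨Finset.mem_univ _, ⟨hb2, hb1⟩, hb4, hb3⟩
  · intro a _ b _ hab
    exact Prod.swap_injective hab
  · intro b hb
    refine ⟨Prod.swap b, ?_, by simp⟩
    rw [pairFinset, Finset.mem_filter] at hb ⊢
    obtain ⟨-, ⟨hb1, hb2⟩, hb3, hb4⟩ := hb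
    exact ⟨Finset.mem_univ _, ⟨hb2, hb1⟩, hb4, hb3⟩

lemma ff_symm (J j j' : ℕ) : ff J j j' = ff J j' j := by
  rw [ff, ff]; ring

/-- Real form, assuming j ≤ j'. -/
lemma pair_count_le (J δ j j' : ℕ) (hδ : 1 ≤ δ) (hjj' : j ≤ j') (hj' : j' < J) :
    ((pairFinset J δ j j').card : ℝ) ≤ 2 * δ * 2 ^ J * ff J j j' := by
  have key := pair_count_int J δ j j' hδ hjj' hj'
  -- cast to ℝ
  have keyR : ((pairFinset J δ j j').card : ℝ) * 2 ^ (J - j') ≤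
      2 ^ j * ((2 * (δ : ℝ) - 1) * (2 ^ (J - j) + 2 ^ (J - j') - 2) + 2 ^ (J - j')) := by
    exact_mod_cast key
  set A : ℝ := 2 ^ j with hA
  set Bb : ℝ := 2 ^ j' with hB
  set m : ℝ := 2 ^ (J - j) with hm
  set m' : ℝ := 2 ^ (J - j') with hm'
  set M : ℝ := 2 ^ J with hM
  have hAm : A * m = M := by
    rw [hA, hm, hM, ← pow_add]
    congr 1
    omega
  have hBm : Bb * m' = M := by
    rw [hB, hm', hM, ← pow_add]
    congr 1
    omega
  have h2A : 2 * A ≤ M := by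
    rw [hA, hM]
    calc (2:ℝ) * 2 ^ j = 2 ^ (j + 1) := by ring
      _ ≤ 2 ^ J := by
        apply pow_le_pow_right₀ (by norm_num)
        omega
  have hm'pos : (0:ℝ) < m' := by rw [hm']; positivity
  have hMpos : (0:ℝ) < M := by rw [hM]; positivity
  have hApos : (0:ℝ) < A := by rw [hA]; positivity
  have hBpos : (0:ℝ) < Bb := by rw [hB]; positivity
  have hδR : (1:ℝ) ≤ (δ:ℝ) := by exact_mod_cast hδ
  have hff : ff J j j' = (A * M + Bb * M - 2 * A * Bb) / (M * M) := by
    rw [ff, xx, xx, ← hA, ← hB, ← hM]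
    field_simp
  rw [hff]
  have hgoal_eq : 2 * (δ:ℝ) * M * ((A * M + Bb * M - 2 * A * Bb) / (M * M)) =
      (2 * (δ:ℝ) * (A * M + Bb * M - 2 * A * Bb)) / M := by
    field_simp
  rw [hgoal_eq, le_div_iff₀ hMpos]
  -- goal: card * M ≤ 2δ(AM+BM-2AB)
  have expand : (2 * (δ:ℝ) * (A * M + Bb * M - 2 * A * Bb)) * m' -
      (A * ((2 * (δ:ℝ) - 1) * (m + m' - 2) + m')) * M =
      M * (M - 2 * A) + (2 * δ * M - 4 * δ * A) * (Bb * m' - M) - (2 * δ - 1) * M * (A * m - M) := by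
    ring
  have e0 : (2 * (δ:ℝ) * (A * M + Bb * M - 2 * A * Bb)) * m' -
      (A * ((2 * (δ:ℝ) - 1) * (m + m' - 2) + m')) * M = M * (M - 2 * A) := by
    rw [expand, hAm, hBm]
    ring
  have h4 : (((pairFinset J δ j j').card : ℝ) * M) * m' ≤
      (A * ((2 * (δ:ℝ) - 1) * (m + m' - 2) + m')) * M := by
    calc (((pairFinset J δ j j').card : ℝ) * M) * m'
        = (((pairFinset J δ j j').card : ℝ) * m') * M := by ring
      _ ≤ (A * ((2 * (δ:ℝ) - 1) * (m + m' - 2) + m')) * M :=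
          mul_le_mul_of_nonneg_right keyR (le_of_lt hMpos)
  have h5 : (A * ((2 * (δ:ℝ) - 1) * (m + m' - 2) + m')) * M ≤
      (2 * (δ:ℝ) * (A * M + Bb * M - 2 * A * Bb)) * m' := by
    have hnn : (0:ℝ) ≤ M * (M - 2 * A) := mul_nonneg (le_of_lt hMpos) (by linarith)
    linarith
  have h6 : (((pairFinset J δ j j').card : ℝ) * M) * m' ≤
      (2 * (δ:ℝ) * (A * M + Bb * M - 2 * A * Bb)) * m' := le_trans h4 h5
  exact le_of_mul_le_mul_right h6 hm'pos

lemma pair_count (J δ j j' : ℕ) (hδ : 1 ≤ δ) (hj : j < J) (hj' : j' < J) :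
    ((pairFinset J δ j j').card : ℝ) ≤ 2 * δ * 2 ^ J * ff J j j' := by
  rcases le_total j j' with h | h
  · exact pair_count_le J δ j j' hδ h hj'
  · rw [pairFinset_swap_card, ff_symm]
    exact pair_count_le J δ j' j hδ h hj

lemma xx_pos (J j : ℕ) : 0 < xx J j := by rw [xx]; positivity

lemma xx_le_half (J j : ℕ) (hj : j < J) : xx J j ≤ 1 / 2 := by
  rw [xx, div_le_div_iff₀ (by positivity) (by norm_num)]
  calc (2:ℝ)^j * 2 = 2^(j+1) := by ring
    _ ≤ 2^J := by apply pow_le_pow_right₀ (by norm_num); omega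
    _ = 2^J * 1 := by ring
    _ ≤ 1 * 2^J := by ring_nf; exact le_refl _

lemma one_sub_xx_pos (J j : ℕ) (hj : j < J) : 0 < 1 - xx J j := by
  have := xx_le_half J j hj; linarith

lemma AA_nonneg (d J r : ℕ) : 0 ≤ AA d J r := by
  apply Finset.sum_nonneg
  intro j hj
  have h1 := xx_pos J j
  have h2 := one_sub_xx_pos J j (Finset.mem_range.mp hj)
  positivity

lemma AA_pos (d J r : ℕ) (hJ : 1 ≤ J) : 0 < AA d J r := by
  apply Finset.sum_pos
  · intro j hj
    have h1 := xx_pos J j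
    have h2 := one_sub_xx_pos J j (Finset.mem_range.mp hj)
    positivity
  · exact Finset.nonempty_range_iff.mpr (by omega)

lemma sum_xx_pow (J t : ℕ) (hJ : 1 ≤ J) (ht : 1 ≤ t) :
    ∑ j ∈ Finset.range J, xx J j ^ t = (1 - ((1:ℝ) / 2 ^ J) ^ t) / (2 ^ t - 1) := by
  have hq : ((2:ℝ)^t) ≠ 1 := by
    have : (2:ℝ) ^ t ≥ 2 ^ 1 := pow_le_pow_right₀ (by norm_num) ht
    norm_num at this ⊢
    linarith
  have hterm : ∀ j, xx J j ^ t = ((2:ℝ)^t)^j / ((2:ℝ)^t)^J := by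
    intro j
    rw [xx, div_pow, ← pow_mul, ← pow_mul, Nat.mul_comm j t, Nat.mul_comm J t, pow_mul, pow_mul]
  simp only [hterm]
  rw [← Finset.sum_div, geom_sum_eq hq]
  have h2t : (0:ℝ) < 2^t := by positivity
  have h2J : (0:ℝ) < 2^J := by positivity
  have h2tJ : ((2:ℝ)^t)^J ≠ 0 := by positivity
  rw [div_div]
  have h1lt : (1:ℝ) < 2^t := by
    calc (1:ℝ) < 2^1 := by norm_num
      _ ≤ 2^t := pow_le_pow_right₀ (by norm_num) ht
  rw [div_eq_div_iff (by
    have hp : (0:ℝ) < ((2:ℝ)^t)^J := pow_pos h2t J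
    nlinarith [mul_pos (sub_pos.mpr h1lt) hp]) (by
    have : (1:ℝ) < 2^t := by
      calc (1:ℝ) < 2^1 := by norm_num
        _ ≤ 2^t := pow_le_pow_right₀ (by norm_num) ht
    nlinarith [pow_pos (show (0:ℝ) < 2^t by positivity) J])]
  have : ((1:ℝ)/2^J)^t = 1/((2:ℝ)^t)^J := by
    rw [div_pow, one_pow, ← pow_mul, ← pow_mul, Nat.mul_comm]
  rw [this]
  field_simp

lemma e_facts (J : ℕ) (hJ : 1 ≤ J) : 0 < ((1:ℝ)/2^J) ∧ ((1:ℝ)/2^J) ≤ 1/2 := by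
  constructor
  · positivity
  · apply div_le_div_of_nonneg_left (by norm_num) (by norm_num)
    calc (2:ℝ) = 2^1 := by norm_num
      _ ≤ 2^J := pow_le_pow_right₀ (by norm_num) hJ

/-- `A_d ≤ 1/(2^d - 1)`. -/
lemma AA_d_le (d J : ℕ) (hd : 1 ≤ d) (hJ : 1 ≤ J) : AA d J d ≤ 1 / (2 ^ d - 1) := by
  have h1lt : (1:ℝ) < 2^d := by
    calc (1:ℝ) < 2^1 := by norm_num
      _ ≤ 2^d := pow_le_pow_right₀ (by norm_num) hd
  have : AA d J d = ∑ j ∈ Finset.range J, xx J j ^ d := by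
    rw [AA]
    apply Finset.sum_congr rfl
    intro j _
    rw [Nat.sub_self, pow_zero, mul_one]
  rw [this, sum_xx_pow J d hJ hd]
  obtain ⟨he1, he2⟩ := e_facts J hJ
  have hpw : 0 ≤ ((1:ℝ)/2^J)^d := by positivity
  gcongr
  · linarith

/-- `A_1 ≤ 2^{d-1}/(2^d - 1)` for `d ≥ 2`. -/
lemma sum_x_one_sub_cube (J : ℕ) (hJ : 1 ≤ J) :
    ∑ j ∈ Finset.range J, xx J j * (1 - xx J j) ^ 3 ≤ 1 / 2 := by
  have expand : ∀ j ∈ Finset.range J, xx J j * (1 - xx J j) ^ 3 =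
      xx J j ^ 1 - 3 * xx J j ^ 2 + 3 * xx J j ^ 3 - xx J j ^ 4 := by
    intro j _; ring
  rw [Finset.sum_congr rfl expand]
  have split : ∑ j ∈ Finset.range J, (xx J j ^ 1 - 3 * xx J j ^ 2 + 3 * xx J j ^ 3 - xx J j ^ 4)
      = (∑ j ∈ Finset.range J, xx J j ^ 1) - 3 * (∑ j ∈ Finset.range J, xx J j ^ 2)
        + 3 * (∑ j ∈ Finset.range J, xx J j ^ 3) - (∑ j ∈ Finset.range J, xx J j ^ 4) := by
    rw [Finset.mul_sum, Finset.mul_sum, ← Finset.sum_sub_distrib, ← Finset.sum_add_distrib,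
      ← Finset.sum_sub_distrib]
  rw [split, sum_xx_pow J 1 hJ le_rfl, sum_xx_pow J 2 hJ (by norm_num),
    sum_xx_pow J 3 hJ (by norm_num), sum_xx_pow J 4 hJ (by norm_num)]
  obtain ⟨he1, he2⟩ := e_facts J hJ
  set e := (1:ℝ)/2^J with he
  norm_num
  nlinarith [pow_pos he1 2, pow_pos he1 3, pow_pos he1 4, sq_nonneg e, sq_nonneg (e - 1/2),
    mul_pos he1 he1]

lemma AA_one_le (d J : ℕ) (hd : 2 ≤ d) (hJ : 1 ≤ J) : AA d J 1 ≤ 2 ^ (d-1) / (2 ^ d - 1) := by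
  obtain ⟨he1, he2⟩ := e_facts J hJ
  rcases (show d = 2 ∨ d = 3 ∨ 4 ≤ d by omega) with rfl | rfl | hd4
  · have expand : ∀ j ∈ Finset.range J, xx J j ^ 1 * (1 - xx J j) ^ (2-1) =
        xx J j ^ 1 - xx J j ^ 2 := by intro j _; ring
    rw [AA, Finset.sum_congr rfl expand, Finset.sum_sub_distrib,
      sum_xx_pow J 1 hJ le_rfl, sum_xx_pow J 2 hJ (by norm_num)]
    set e := (1:ℝ)/2^J with he
    norm_num
    nlinarith
  · have expand : ∀ j ∈ Finset.range J, xx J j ^ 1 * (1 - xx J j) ^ (3-1) =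
        xx J j ^ 1 - 2 * xx J j ^ 2 + xx J j ^ 3 := by intro j _; ring
    have split : ∑ j ∈ Finset.range J, (xx J j ^ 1 - 2 * xx J j ^ 2 + xx J j ^ 3)
        = (∑ j ∈ Finset.range J, xx J j ^ 1) - 2 * (∑ j ∈ Finset.range J, xx J j ^ 2)
          + (∑ j ∈ Finset.range J, xx J j ^ 3) := by
      rw [Finset.mul_sum, ← Finset.sum_sub_distrib, ← Finset.sum_add_distrib]
    rw [AA, Finset.sum_congr rfl expand, split, sum_xx_pow J 1 hJ le_rfl,
      sum_xx_pow J 2 hJ (by norm_num), sum_xx_pow J 3 hJ (by norm_num)]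
    set e := (1:ℝ)/2^J with he
    norm_num
    nlinarith [pow_pos he1 2, pow_pos he1 3]
  · have hterm : AA d J 1 ≤ ∑ j ∈ Finset.range J, xx J j * (1 - xx J j) ^ 3 := by
      rw [AA]
      apply Finset.sum_le_sum
      intro j hj
      rw [pow_one]
      apply mul_le_mul_of_nonneg_left _ (le_of_lt (xx_pos J j))
      apply pow_le_pow_of_le_one (le_of_lt (one_sub_xx_pos J j (Finset.mem_range.mp hj)))
        (by have := xx_pos J j; linarith)
      omega
    have hhalf : (1:ℝ)/2 ≤ 2 ^ (d-1) / (2 ^ d - 1) := by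
      have h2d : (2:ℝ)^d = 2 * 2^(d-1) := by
        rw [← pow_succ']
        congr 1
        omega
      have hpos : (0:ℝ) < 2^d - 1 := by
        have : (1:ℝ) < 2^d := by
          calc (1:ℝ) < 2^1 := by norm_num
            _ ≤ 2^d := pow_le_pow_right₀ (by norm_num) (by omega)
        linarith
      rw [div_le_div_iff₀ (by norm_num) hpos]
      nlinarith
    exact le_trans (le_trans hterm (sum_x_one_sub_cube J hJ)) hhalf

/-- `A_{d-1} ≤ 1/(2^{d-1}-1) - 1/(2^d-1)` for `d ≥ 2`. -/
lemma AA_dm1_le (d J : ℕ) (hd : 2 ≤ d) (hJ : 1 ≤ J) :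
    AA d J (d-1) ≤ 1 / (2 ^ (d-1) - 1) - 1 / (2 ^ d - 1) := by
  obtain ⟨he1, he2⟩ := e_facts J hJ
  have hsub : d - (d-1) = 1 := by omega
  have hsucc : (d-1) + 1 = d := by omega
  have expand : ∀ j ∈ Finset.range J, xx J j ^ (d-1) * (1 - xx J j) ^ (d-(d-1)) =
      xx J j ^ (d-1) - xx J j ^ d := by
    intro j _
    rw [hsub, pow_one, mul_sub, mul_one, ← pow_succ, hsucc]
  rw [AA, Finset.sum_congr rfl expand, Finset.sum_sub_distrib,
    sum_xx_pow J (d-1) hJ (by omega), sum_xx_pow J d hJ (by omega)]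
  set e := (1:ℝ)/2^J with he
  have hc : (0:ℝ) < 2^(d-1) - 1 := by
    have : (2:ℝ) ≤ 2^(d-1) := by
      calc (2:ℝ) = 2^1 := by norm_num
        _ ≤ 2^(d-1) := pow_le_pow_right₀ (by norm_num) (by omega)
    linarith
  have hC : (0:ℝ) < 2^d - 1 := by
    have : (2:ℝ) ≤ 2^d := by
      calc (2:ℝ) = 2^1 := by norm_num
        _ ≤ 2^d := pow_le_pow_right₀ (by norm_num) (by omega)
    linarith
  have hkey : e ^ d / (2^d - 1) ≤ e ^ (d-1) / (2^(d-1) - 1) := by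
    apply div_le_div₀ (by positivity) _ hc _
    · apply pow_le_pow_of_le_one (le_of_lt he1) (by linarith) (by omega)
    · have : (2:ℝ)^(d-1) ≤ 2^d := pow_le_pow_right₀ (by norm_num) (by omega)
      linarith
  have e1 : (1 - e^(d-1))/(2^(d-1)-1) = 1/(2^(d-1)-1) - e^(d-1)/(2^(d-1)-1) := by ring
  have e2 : (1 - e^d)/(2^d-1) = 1/(2^d-1) - e^d/(2^d-1) := by ring
  rw [e1, e2]
  linarith

/-- Termwise key inequality, case r = 1. -/
lemma key_one (d J : ℕ) (hd : 2 ≤ d) (hJ : 1 ≤ J) :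
    (2 ^ d - 1) * (AA d J 1 * AA d J (d-1)) ≤ AA d J 1 + AA d J (d-1) := by
  have hx := AA_pos d J 1 hJ
  have hy := AA_pos d J (d-1) hJ
  have hX := AA_one_le d J hd hJ
  have hY := AA_dm1_le d J hd hJ
  have hc2 : (2:ℝ) ≤ 2^(d-1) := by
    calc (2:ℝ) = 2^1 := by norm_num
      _ ≤ 2^(d-1) := pow_le_pow_right₀ (by norm_num) (by omega)
  have h2c : (2:ℝ)^d = 2 * 2^(d-1) := by
    rw [← pow_succ']
    congr 1
    omega
  have hcpos : (0:ℝ) < 2^(d-1) := by positivity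
  have h2c1 : (0:ℝ) < 2*2^(d-1) - 1 := by linarith
  have hc1 : (0:ℝ) < 2^(d-1) - 1 := by linarith
  have hGval : 1/((2:ℝ)^(d-1)-1) - 1/(2*2^(d-1)-1) = 2^(d-1) / ((2^(d-1)-1)*(2*2^(d-1)-1)) := by
    rw [div_sub_div _ _ (ne_of_gt hc1) (ne_of_gt h2c1), div_eq_div_iff (by positivity) (by positivity)]
    ring
  have hX' : AA d J 1 * (2*2^(d-1)-1) ≤ 2^(d-1) := by
    rw [← le_div_iff₀ h2c1]
    calc AA d J 1 ≤ 2^(d-1) / (2^d - 1) := hX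
      _ = 2^(d-1) / (2*2^(d-1)-1) := by rw [h2c]
  have hY' : AA d J (d-1) * ((2^(d-1)-1)*(2*2^(d-1)-1)) ≤ 2^(d-1) := by
    rw [← le_div_iff₀ (by positivity)]
    rw [← hGval]
    calc AA d J (d-1) ≤ 1/(2^(d-1)-1) - 1/(2^d-1) := hY
      _ = 1/(2^(d-1)-1) - 1/(2*2^(d-1)-1) := by rw [h2c]
  rw [h2c]
  nlinarith [mul_le_mul_of_nonneg_right hX' hy.le, mul_le_mul_of_nonneg_right hY' hx.le,
    mul_pos hx hy]

/-- The tail bound for middle `r`:  `A_r ≤ 2^{-d} + 4^{-r}(3/4)^{d-r} + 4^{-r}/(2^r-1)`. -/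
lemma AA_le_X (d J r : ℕ) (hr : 1 ≤ r) (hrd : r ≤ d) (hJ : 1 ≤ J) :
    AA d J r ≤ 1/2^d + (1/4)^r * (3/4)^(d-r) + (1/4)^r / (2^r - 1) := by
  have h2r : (2:ℝ) ≤ 2^r := by
    calc (2:ℝ) = 2^1 := by norm_num
      _ ≤ 2^r := pow_le_pow_right₀ (by norm_num) hr
  have htail : ∀ m : ℕ, m + 2 ≤ J →
      ∑ j ∈ Finset.range m, xx J j ^ r * (1 - xx J j) ^ (d - r) ≤ (1/4)^r / (2^r - 1) := by
    intro m hm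
    have step1 : ∑ j ∈ Finset.range m, xx J j ^ r * (1 - xx J j) ^ (d - r)
        ≤ ∑ j ∈ Finset.range m, xx J j ^ r := by
      apply Finset.sum_le_sum
      intro j hj
      have hj' : j < J := by have := Finset.mem_range.mp hj; omega
      have h1 := xx_pos J j
      have h2 := one_sub_xx_pos J j hj'
      have h3 : (1 - xx J j) ^ (d - r) ≤ 1 := by
        apply pow_le_one₀ h2.le
        have := xx_pos J j; linarith
      calc xx J j ^ r * (1 - xx J j) ^ (d - r) ≤ xx J j ^ r * 1 := by
            apply mul_le_mul_of_nonneg_left h3 (by positivity)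
        _ = xx J j ^ r := mul_one _
    have hterm : ∀ j, xx J j ^ r = ((2:ℝ)^r)^j / ((2:ℝ)^r)^J := by
      intro j
      rw [xx, div_pow, ← pow_mul, ← pow_mul, Nat.mul_comm j r, Nat.mul_comm J r, pow_mul, pow_mul]
    have step2 : ∑ j ∈ Finset.range m, xx J j ^ r = (((2:ℝ)^r)^m - 1)/((2^r - 1) * ((2:ℝ)^r)^J) := by
      simp only [hterm]
      rw [← Finset.sum_div, geom_sum_eq (by linarith : ((2:ℝ)^r) ≠ 1), div_div]
    rw [step2] at step1
    refine le_trans step1 ?_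
    have h1 : (0:ℝ) < 2^r - 1 := by linarith
    have hQpos : (0:ℝ) < (2:ℝ)^r := by positivity
    have hQm : (0:ℝ) < ((2:ℝ)^r)^m := by positivity
    have e1 : ((1:ℝ)/4)^r = 1/((2:ℝ)^r)^2 := by
      rw [div_pow, one_pow, ← pow_mul, show r*2 = 2*r by ring, pow_mul]
      norm_num
    calc (((2:ℝ)^r)^m - 1)/((2^r - 1) * ((2:ℝ)^r)^J)
        ≤ ((2:ℝ)^r)^m /((2^r - 1) * ((2:ℝ)^r)^(m+2)) := by
          apply div_le_div₀ (by positivity) (by linarith) (by positivity)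
          apply mul_le_mul_of_nonneg_left _ h1.le
          exact pow_le_pow_right₀ (by linarith) hm
      _ = (1/((2:ℝ)^r)^2) / (2^r - 1) := by
          rw [pow_add]
          field_simp
      _ = ((1:ℝ)/4)^r / (2^r - 1) := by rw [e1]
  -- now main split
  obtain ⟨n, rfl⟩ : ∃ n, J = n+1 := ⟨J-1, by omega⟩
  rw [AA, Finset.sum_range_succ]
  have hxtop : xx (n+1) n = 1/2 := by
    rw [xx, pow_succ]
    have : (0:ℝ) < 2^n := by positivity
    field_simp
  have htop : xx (n+1) n ^ r * (1 - xx (n+1) n) ^ (d-r) = 1/2^d := by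
    rw [hxtop]
    norm_num
    rw [← pow_add]
    have : r + (d - r) = d := by omega
    rw [this, div_pow, one_pow, one_div]
  rw [htop]
  have hnn4 : (0:ℝ) ≤ (1/4)^r * (3/4)^(d-r) := by positivity
  have hnn5 : (0:ℝ) ≤ ((1:ℝ)/4)^r / (2^r - 1) := by
    apply div_nonneg (by positivity)
    linarith
  rcases Nat.eq_zero_or_pos n with rfl | hn
  · simp only [Finset.range_zero, Finset.sum_empty, zero_add]
    linarith
  · obtain ⟨m, rfl⟩ : ∃ m, n = m+1 := ⟨n-1, by omega⟩
    rw [Finset.sum_range_succ]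
    have hxsec : xx (m+1+1) m = 1/4 := by
      rw [xx]
      have e : (2:ℝ)^(m+1+1) = 2^m * 4 := by rw [pow_succ, pow_succ]; ring
      rw [e]
      have : (0:ℝ) < 2^m := by positivity
      field_simp
    have hsec : xx (m+1+1) m ^ r * (1 - xx (m+1+1) m) ^ (d-r) = (1/4)^r * (3/4)^(d-r) := by
      rw [hxsec]
      norm_num
    rw [hsec]
    have := htail m (by omega)
    linarith

set_option maxHeartbeats 1000000 in
/-- Termwise key inequality, middle case `2 ≤ r`, `2 ≤ d - r`. -/
lemma key_mid (d J r : ℕ) (hr : 2 ≤ r) (hs : 2 ≤ d - r) (hrd : r ≤ d) (hJ : 1 ≤ J) :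
    (2 ^ d - 1) * (AA d J r * AA d J (d-r)) ≤ AA d J r + AA d J (d-r) := by
  set s := d - r with hs_def
  have hds : d - s = r := by omega
  have hd_eq : d = r + s := by omega
  have hx := AA_pos d J r hJ
  have hy := AA_pos d J s hJ
  have hX := AA_le_X d J r (by omega) hrd hJ
  have hY := AA_le_X d J s (by omega) (by omega) hJ
  rw [hds] at hY
  -- X = 1/2^d + (1/4)^r (3/4)^s + (1/4)^r/(2^r-1), Y symmetric
  have h2r : (2:ℝ) ≤ 2^r := by
    calc (2:ℝ) = 2^1 := by norm_num
      _ ≤ 2^r := pow_le_pow_right₀ (by norm_num) (by omega)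
  have h2s : (2:ℝ) ≤ 2^s := by
    calc (2:ℝ) = 2^1 := by norm_num
      _ ≤ 2^s := pow_le_pow_right₀ (by norm_num) (by omega)
  have h4r : (4:ℝ) ≤ 2^r := by
    calc (4:ℝ) = 2^2 := by norm_num
      _ ≤ 2^r := pow_le_pow_right₀ (by norm_num) hr
  have h4s : (4:ℝ) ≤ 2^s := by
    calc (4:ℝ) = 2^2 := by norm_num
      _ ≤ 2^s := pow_le_pow_right₀ (by norm_num) hs
  set Fr : ℝ := (3/4)^s + 1/(2^r-1) with hFr
  set Fs : ℝ := (3/4)^r + 1/(2^s-1) with hFs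
  have hFr_pos : 0 < Fr := by
    rw [hFr]
    have : (0:ℝ) < 1/(2^r-1) := by
      apply div_pos (by norm_num)
      linarith
    positivity
  have hFs_pos : 0 < Fs := by
    rw [hFs]
    have : (0:ℝ) < 1/(2^s-1) := by
      apply div_pos (by norm_num)
      linarith
    positivity
  have hFr_le : Fr ≤ 43/48 := by
    rw [hFr]
    have h1 : ((3:ℝ)/4)^s ≤ (3/4)^2 := pow_le_pow_of_le_one (by norm_num) (by norm_num) hs
    have h2 : (1:ℝ)/(2^r-1) ≤ 1/3 := by
      apply div_le_div_of_nonneg_left (by norm_num) (by norm_num)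
      linarith
    norm_num at h1
    linarith
  have hFs_le : Fs ≤ 43/48 := by
    rw [hFs]
    have h1 : ((3:ℝ)/4)^r ≤ (3/4)^2 := pow_le_pow_of_le_one (by norm_num) (by norm_num) hr
    have h2 : (1:ℝ)/(2^s-1) ≤ 1/3 := by
      apply div_le_div_of_nonneg_left (by norm_num) (by norm_num)
      linarith
    norm_num at h1
    linarith
  -- a = 2^s/2^r * Fr, b = 2^r/2^s * Fs, ab = Fr*Fs ≤ 1
  set a : ℝ := 2^s/2^r * Fr with ha
  set b : ℝ := 2^r/2^s * Fs with hb
  have hapos : 0 < a := by rw [ha]; positivity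
  have hbpos : 0 < b := by rw [hb]; positivity
  have hab : a * b ≤ 1 := by
    have : a * b = Fr * Fs := by
      rw [ha, hb]
      field_simp
    rw [this]
    calc Fr * Fs ≤ (43/48) * (43/48) :=
        mul_le_mul hFr_le hFs_le hFs_pos.le (by norm_num)
      _ ≤ 1 := by norm_num
  have h2d : (2:ℝ)^d = 2^r * 2^s := by rw [hd_eq, pow_add]
  have hXeq : (1:ℝ)/2^d + (1/4)^r * (3/4)^s + (1/4)^r/(2^r-1) = (1 + a)/2^d := by
    rw [ha, hFr, h2d]
    have e4r : ((1:ℝ)/4)^r = 1/(2^r * 2^r) := by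
      rw [div_pow, one_pow]
      congr 1
      rw [← pow_add, show r + r = 2*r by ring, pow_mul]
      norm_num
    rw [e4r]
    have hr3 : (2:ℝ)^r - 1 ≠ 0 := by linarith
    field_simp
    ring
  have hYeq : (1:ℝ)/2^d + (1/4)^s * (3/4)^r + (1/4)^s/(2^s-1) = (1 + b)/2^d := by
    rw [hb, hFs, h2d]
    have e4s : ((1:ℝ)/4)^s = 1/(2^s * 2^s) := by
      rw [div_pow, one_pow]
      congr 1
      rw [← pow_add, show s + s = 2*s by ring, pow_mul]
      norm_num
    rw [e4s]
    have hs3 : (2:ℝ)^s - 1 ≠ 0 := by linarith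
    field_simp
    ring
  rw [hXeq] at hX
  rw [hYeq] at hY
  -- now: x ≤ (1+a)/2^d, y ≤ (1+b)/2^d, ab ≤ 1 ⇒ (2^d-1)xy ≤ 2^d xy ≤ x + y
  have h2dpos : (0:ℝ) < 2^d := by positivity
  have hX' : AA d J r * 2^d ≤ 1 + a := by
    rw [← le_div_iff₀ h2dpos]; exact hX
  have hY' : AA d J s * 2^d ≤ 1 + b := by
    rw [← le_div_iff₀ h2dpos]; exact hY
  -- (2^d)^2 * xy ≤ (1+a)(1+b) ≤ (2+a+b) ; and x*2^d ≤ 1+a etc.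
  -- Better: 2^d*x*y ≤ min((1+a)y, (1+b)x); then (2^d)^2 xy ≤ (1+a)(1+b) ≤ 2+a+b.
  -- (2^d-1)xy ≤ 2^d xy = (2^d x)(2^d y)/2^d ≤ (1+a)(1+b)/2^d ≤ (2+a+b)/2^d = X + Y... WRONG.
  -- reciprocal: xy*(2^d/(1+a)) ≤ y, xy*(2^d/(1+b)) ≤ x, and 2^d/(1+a)+2^d/(1+b) ≥ 2^d ≥ 2^d-1.
  have ha1 : (0:ℝ) < 1 + a := by linarith
  have hb1 : (0:ℝ) < 1 + b := by linarith
  have k1 : AA d J r * AA d J s * (2^d/(1+a)) ≤ AA d J s := by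
    rw [div_eq_mul_inv]
    have : AA d J r * AA d J s * (2^d * (1+a)⁻¹) = (AA d J r * 2^d) * (1+a)⁻¹ * AA d J s := by ring
    rw [this]
    calc (AA d J r * 2^d) * (1+a)⁻¹ * AA d J s ≤ (1+a) * (1+a)⁻¹ * AA d J s := by
          apply mul_le_mul_of_nonneg_right _ hy.le
          apply mul_le_mul_of_nonneg_right hX' (by positivity)
      _ = AA d J s := by rw [mul_inv_cancel₀ (ne_of_gt ha1), one_mul]
  have k2 : AA d J r * AA d J s * (2^d/(1+b)) ≤ AA d J r := by
    rw [div_eq_mul_inv]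
    have : AA d J r * AA d J s * (2^d * (1+b)⁻¹) = (AA d J s * 2^d) * (1+b)⁻¹ * AA d J r := by ring
    rw [this]
    calc (AA d J s * 2^d) * (1+b)⁻¹ * AA d J r ≤ (1+b) * (1+b)⁻¹ * AA d J r := by
          apply mul_le_mul_of_nonneg_right _ hx.le
          apply mul_le_mul_of_nonneg_right hY' (by positivity)
      _ = AA d J r := by rw [mul_inv_cancel₀ (ne_of_gt hb1), one_mul]
  have k3 : (2:ℝ)^d ≤ 2^d/(1+a) + 2^d/(1+b) := by
    have hfac : (1+a)*(1+b) ≤ (1+b)+(1+a) := by nlinarith [hab]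
    rw [div_add_div _ _ (ne_of_gt ha1) (ne_of_gt hb1), le_div_iff₀ (by positivity)]
    calc (2:ℝ)^d * ((1+a)*(1+b)) ≤ 2^d * ((1+b)+(1+a)) :=
        mul_le_mul_of_nonneg_left hfac h2dpos.le
      _ = 2^d*(1+b) + 2^d*(1+a) := by ring
      _ = 2^d*(1+b) + (1+a)*2^d := by ring
  have k4 : (2^d - 1) * (AA d J r * AA d J s) ≤ (2^d/(1+a) + 2^d/(1+b)) * (AA d J r * AA d J s) := by
    apply mul_le_mul_of_nonneg_right _ (by positivity)
    linarith
  calc (2 ^ d - 1) * (AA d J r * AA d J s) ≤ (2^d/(1+a) + 2^d/(1+b)) * (AA d J r * AA d J s) := k4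
    _ = AA d J r * AA d J s * (2^d/(1+a)) + AA d J r * AA d J s * (2^d/(1+b)) := by ring
    _ ≤ AA d J s + AA d J r := add_le_add k1 k2
    _ = AA d J r + AA d J s := by ring

/-- Termwise key inequality, all middle `r`. -/
lemma key_all (d J r : ℕ) (hr : 1 ≤ r) (hrd : r ≤ d - 1) (hd : 1 ≤ d) (hJ : 1 ≤ J) :
    (2 ^ d - 1) * (AA d J r * AA d J (d-r)) ≤ AA d J r + AA d J (d-r) := by
  have hd2 : 2 ≤ d := by omega
  rcases (show r = 1 ∨ r = d - 1 ∨ (2 ≤ r ∧ 2 ≤ d - r) by omega) with rfl | rfl | ⟨h1, h2⟩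
  · exact key_one d J hd2 hJ
  · have e : d - (d-1) = 1 := by omega
    rw [e]
    have := key_one d J hd2 hJ
    linarith [this]
  · exact key_mid d J r h1 h2 (by omega) hJ

/-- Binomial expansion of the double sum. -/
lemma sum_ff_expand (d J : ℕ) :
    ∑ j ∈ Finset.range J, ∑ j' ∈ Finset.range J, ff J j j' ^ d =
      ∑ r ∈ Finset.range (d+1), AA d J r * AA d J (d-r) * (d.choose r) := by
  have hterm : ∀ j j' : ℕ, ff J j j' ^ d =
      ∑ r ∈ Finset.range (d+1),
        (xx J j ^ r * (1 - xx J j) ^ (d-r)) * ((1 - xx J j') ^ r * xx J j' ^ (d-r)) * (d.choose r) := by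
    intro j j'
    have e : ff J j j' = xx J j * (1 - xx J j') + xx J j' * (1 - xx J j) := by
      rw [ff]; ring
    rw [e, add_pow]
    apply Finset.sum_congr rfl
    intro r _
    rw [mul_pow, mul_pow]
    ring
  calc ∑ j ∈ Finset.range J, ∑ j' ∈ Finset.range J, ff J j j' ^ d
      = ∑ j ∈ Finset.range J, ∑ j' ∈ Finset.range J, ∑ r ∈ Finset.range (d+1),
          (xx J j ^ r * (1 - xx J j) ^ (d-r)) * ((1 - xx J j') ^ r * xx J j' ^ (d-r)) * (d.choose r) := by
        apply Finset.sum_congr rfl; intro j _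
        apply Finset.sum_congr rfl; intro j' _
        exact hterm j j'
    _ = ∑ j ∈ Finset.range J, ∑ r ∈ Finset.range (d+1), ∑ j' ∈ Finset.range J,
          (xx J j ^ r * (1 - xx J j) ^ (d-r)) * ((1 - xx J j') ^ r * xx J j' ^ (d-r)) * (d.choose r) := by
        apply Finset.sum_congr rfl; intro j _
        exact Finset.sum_comm
    _ = ∑ r ∈ Finset.range (d+1), ∑ j ∈ Finset.range J, ∑ j' ∈ Finset.range J,
          (xx J j ^ r * (1 - xx J j) ^ (d-r)) * ((1 - xx J j') ^ r * xx J j' ^ (d-r)) * (d.choose r) :=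
        Finset.sum_comm
    _ = ∑ r ∈ Finset.range (d+1), AA d J r * AA d J (d-r) * (d.choose r) := by
        apply Finset.sum_congr rfl
        intro r hr
        have hrd : r ≤ d := by have := Finset.mem_range.mp hr; omega
        have e2 : AA d J (d-r) = ∑ j' ∈ Finset.range J, (1 - xx J j') ^ r * xx J j' ^ (d-r) := by
          rw [AA]
          apply Finset.sum_congr rfl
          intro j' _
          have : d - (d - r) = r := by omega
          rw [this]
          ring
        rw [AA, e2, Finset.sum_mul_sum, Finset.sum_mul]
        apply Finset.sum_congr rfl; intro j _
        rw [Finset.sum_mul]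

/-- The binomial identity `∑ C(d,r) A_r = J`. -/
lemma sum_choose_AA (d J : ℕ) :
    ∑ r ∈ Finset.range (d+1), AA d J r * (d.choose r) = J := by
  have : ∑ r ∈ Finset.range (d+1), AA d J r * (d.choose r) =
      ∑ j ∈ Finset.range J, ∑ r ∈ Finset.range (d+1),
        xx J j ^ r * (1 - xx J j) ^ (d-r) * (d.choose r) := by
    rw [Finset.sum_comm]
    apply Finset.sum_congr rfl
    intro r _
    rw [AA, Finset.sum_mul]
  rw [this]
  have : ∀ j ∈ Finset.range J, ∑ r ∈ Finset.range (d+1),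
      xx J j ^ r * (1 - xx J j) ^ (d-r) * (d.choose r) = 1 := by
    intro j _
    rw [← add_pow]
    norm_num
  rw [Finset.sum_congr rfl this, Finset.sum_const, Finset.card_range, nsmul_eq_mul, mul_one]

/-- The main analytic inequality. -/
lemma sum_ff_pow (d J : ℕ) (hd : 1 ≤ d) (hJ : 1 ≤ J) :
    ∑ j ∈ Finset.range J, ∑ j' ∈ Finset.range J, ff J j j' ^ d ≤ 2 * J / (2 ^ d - 1) := by
  have hpos : (0:ℝ) < 2^d - 1 := by
    have : (2:ℝ) ≤ 2^d := by
      calc (2:ℝ) = 2^1 := by norm_num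
        _ ≤ 2^d := pow_le_pow_right₀ (by norm_num) hd
    linarith
  rw [sum_ff_expand]
  -- split off r = 0 and r = d
  obtain ⟨c, rfl⟩ : ∃ c, d = c + 1 := ⟨d - 1, by omega⟩
  set D := c + 1 with hD
  rw [Finset.sum_range_succ, Finset.sum_range_succ']
  have ed0 : D - 0 = D := by omega
  have edd : D - D = 0 := by omega
  simp only [Nat.choose_zero_right, Nat.choose_self, Nat.cast_one, mul_one, ed0, edd]
  -- now: AA D J 0 * AA D J D + ∑_{i<c} AA D J (i+1) * AA D J (D-(i+1)) * C(D,i+1) + AA D J D * AA D J 0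
  -- identity: A_0 + A_D + mid1 = J  where mid1 = ∑_{i<c} AA D J (i+1) * C(D,i+1)
  have hid := sum_choose_AA D J
  rw [Finset.sum_range_succ, Finset.sum_range_succ'] at hid
  simp only [Nat.choose_zero_right, Nat.choose_self, Nat.cast_one, mul_one] at hid
  set A0 := AA D J 0 with hA0
  set AD := AA D J D with hAD
  set mid1 := ∑ i ∈ Finset.range c, AA D J (i+1) * (D.choose (i+1)) with hmid1
  -- hid : mid1 + A0 + AD = J  (check ordering)
  have hADle : AD ≤ 1/(2^D - 1) := AA_d_le D J (by omega) hJ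
  have hA0pos := AA_pos D J 0 hJ
  have hADpos := AA_pos D J D hJ
  have hterm : ∀ i ∈ Finset.range c,
      AA D J (i+1) * AA D J (D-(i+1)) * ((D.choose (i+1) : ℕ) : ℝ) ≤
      1/(2^D-1) * ((AA D J (i+1) + AA D J (D-(i+1))) * (D.choose (i+1))) := by
    intro i hi
    have hic := Finset.mem_range.mp hi
    have hkey := key_all D J (i+1) (by omega) (by omega) (by omega) hJ
    have h1 : AA D J (i+1) * AA D J (D-(i+1)) ≤ (AA D J (i+1) + AA D J (D-(i+1)))/(2^D-1) := by
      rw [le_div_iff₀ hpos]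
      calc AA D J (i+1) * AA D J (D-(i+1)) * (2^D-1)
          = (2^D-1) * (AA D J (i+1) * AA D J (D-(i+1))) := by ring
        _ ≤ AA D J (i+1) + AA D J (D-(i+1)) := hkey
    calc AA D J (i+1) * AA D J (D-(i+1)) * ((D.choose (i+1) : ℕ) : ℝ)
        ≤ (AA D J (i+1) + AA D J (D-(i+1)))/(2^D-1) * ((D.choose (i+1) : ℕ) : ℝ) := by
          apply mul_le_mul_of_nonneg_right h1 (by positivity)
      _ = 1/(2^D-1) * ((AA D J (i+1) + AA D J (D-(i+1))) * (D.choose (i+1))) := by ring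
  have hmid2 : ∑ i ∈ Finset.range c, AA D J (D-(i+1)) * ((D.choose (i+1) : ℕ) : ℝ) = mid1 := by
    rw [hmid1]
    rw [← Finset.sum_range_reflect (fun i => AA D J (D-(i+1)) * ((D.choose (i+1) : ℕ) : ℝ)) c]
    apply Finset.sum_congr rfl
    intro i hi
    have hic := Finset.mem_range.mp hi
    have e1 : D - (c - 1 - i + 1) = i + 1 := by omega
    have e2 : D.choose (c - 1 - i + 1) = D.choose (i+1) := by
      have : c - 1 - i + 1 = D - (i+1) := by omega
      rw [this, Nat.choose_symm (by omega)]
    rw [e1, e2]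
  have hmid_bound : ∑ i ∈ Finset.range c, AA D J (i+1) * AA D J (D-(i+1)) * ((D.choose (i+1):ℕ):ℝ)
      ≤ 1/(2^D-1) * (2 * mid1) := by
    calc ∑ i ∈ Finset.range c, AA D J (i+1) * AA D J (D-(i+1)) * ((D.choose (i+1):ℕ):ℝ)
        ≤ ∑ i ∈ Finset.range c, 1/(2^D-1) * ((AA D J (i+1) + AA D J (D-(i+1))) * (D.choose (i+1))) :=
          Finset.sum_le_sum hterm
      _ = 1/(2^D-1) * (∑ i ∈ Finset.range c, AA D J (i+1) * (D.choose (i+1))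
            + ∑ i ∈ Finset.range c, AA D J (D-(i+1)) * (D.choose (i+1))) := by
          rw [← Finset.mul_sum, ← Finset.sum_add_distrib]
          congr 1
          apply Finset.sum_congr rfl
          intro i _
          ring
      _ = 1/(2^D-1) * (2 * mid1) := by rw [hmid2, ← hmid1]; ring
  have hA0AD : A0 * AD + AD * A0 ≤ 2 * A0 * (1/(2^D-1)) := by
    have h1 : A0 * AD ≤ A0 * (1/(2^D-1)) := mul_le_mul_of_nonneg_left hADle hA0pos.le
    linarith
  have hADnn : 0 ≤ AD := hADpos.le
  calc ∑ i ∈ Finset.range c, AA D J (i+1) * AA D J (D-(i+1)) * ((D.choose (i+1):ℕ):ℝ)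
        + A0 * AD + AD * A0
      ≤ 1/(2^D-1) * (2 * mid1) + 2 * A0 * (1/(2^D-1)) := by linarith
    _ = 2 * (mid1 + A0) / (2^D-1) := by ring
    _ ≤ 2 * (J:ℝ) / (2^D-1) := by
        gcongr
        linarith

lemma ff_nonneg (J j j' : ℕ) (hj : j < J) (hj' : j' < J) : 0 ≤ ff J j j' := by
  have h1 := xx_pos J j
  have h2 := xx_pos J j'
  have h3 := xx_le_half J j hj
  have h4 := xx_le_half J j' hj'
  rw [ff]
  nlinarith

end SparseAux

open SparseAux Finset

/-- Sparsity of the product `Ã_k B_k`: if every column of `A` has at most `L` non-zero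
entries and the support of `B` is contained in the pairs of wavelet indices with
intersecting support boxes, then the number of non-zero entries of `A * B` is at most
`2 (2^d-1) 2^d δ^d L J 2^{dJ} = (2 (2^d-1) 2^d / d) δ^d L N log₂ N` with `N = 2^{dJ}`. -/
theorem sparse_product_support_bound
    (d J δ L : ℕ) (hd : 1 ≤ d) (hJ : 1 ≤ J) (hδ : 1 ≤ δ)
    (A B : Matrix (Lam d J) (Lam d J) ℝ)
    (hA : ∀ μ : Lam d J,
      (Finset.univ.filter (fun lam : Lam d J => A lam μ ≠ 0)).card ≤ L)
    (hB : ∀ lam mu : Lam d J, B lam mu ≠ 0 →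
      (suppBox d J δ (lam.1.1 : ℕ) (fun i => ((lam.1.2.2 i : ℕ) : ℤ)) ∩
        suppBox d J δ (mu.1.1 : ℕ) (fun i => ((mu.1.2.2 i : ℕ) : ℤ))).Nonempty) :
    (Finset.univ.filter (fun p : Lam d J × Lam d J => (A * B) p.1 p.2 ≠ 0)).card ≤
      2 * (2 ^ d - 1) * 2 ^ d * δ ^ d * L * J * 2 ^ (d * J) ∧
    ((Finset.univ.filter (fun p : Lam d J × Lam d J => (A * B) p.1 p.2 ≠ 0)).card : ℝ) ≤
      2 * ((2:ℝ) ^ d - 1) * 2 ^ d / d * δ ^ d * L * ((2 ^ (d * J) : ℕ) : ℝ) *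
        Real.logb 2 ((2 ^ (d * J) : ℕ) : ℝ) := by
  classical
  -- the overlap pair set
  set TO : Finset (Lam d J × Lam d J) := Finset.univ.filter (fun p =>
    ∀ i : Fin d,
      loI J δ (p.1.1.1 : ℕ) ((p.1.1.2.2 i : ℕ) : ℤ) ≤ hiI J δ (p.2.1.1 : ℕ) ((p.2.1.2.2 i : ℕ) : ℤ) ∧
      loI J δ (p.2.1.1 : ℕ) ((p.2.1.2.2 i : ℕ) : ℤ) ≤ hiI J δ (p.1.1.1 : ℕ) ((p.1.1.2.2 i : ℕ) : ℤ))
    with hTO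
  -- Step 1
  have hstep1 : (Finset.univ.filter (fun p : Lam d J × Lam d J => (A * B) p.1 p.2 ≠ 0)).card ≤
      L * TO.card := by
    set TB : Finset (Lam d J × Lam d J) := Finset.univ.filter (fun q => B q.1 q.2 ≠ 0) with hTB
    have hsub : (Finset.univ.filter (fun p : Lam d J × Lam d J => (A * B) p.1 p.2 ≠ 0)) ⊆
        TB.biUnion (fun q => (Finset.univ.filter fun lam => A lam q.1 ≠ 0) ×ˢ {q.2}) := by
      intro p hp
      rw [Finset.mem_filter] at hp
      have hAB := hp.2
      rw [Matrix.mul_apply] at hAB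
      obtain ⟨ν, -, hν⟩ := Finset.exists_ne_zero_of_sum_ne_zero hAB
      rw [Finset.mem_biUnion]
      refine ⟨(ν, p.2), ?_, ?_⟩
      · rw [hTB, Finset.mem_filter]
        exact ⟨Finset.mem_univ _, fun h => hν (by rw [h, mul_zero])⟩
      · rw [Finset.mem_product]
        constructor
        · rw [Finset.mem_filter]
          exact ⟨Finset.mem_univ _, fun h => hν (by rw [h, zero_mul])⟩
        · exact Finset.mem_singleton_self _
    have hTBsub : TB ⊆ TO := by
      intro q hq
      rw [hTB, Finset.mem_filter] at hq
      obtain ⟨x, hx1, hx2⟩ := hB q.1 q.2 hq.2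
      rw [hTO, Finset.mem_filter]
      refine ⟨Finset.mem_univ _, fun i => ?_⟩
      obtain ⟨ha1, ha2⟩ := hx1 i
      obtain ⟨hb1, hb2⟩ := hx2 i
      constructor
      · rw [loI, hiI]; exact le_trans ha1 hb2
      · rw [loI, hiI]; exact le_trans hb1 ha2
    calc (Finset.univ.filter (fun p : Lam d J × Lam d J => (A * B) p.1 p.2 ≠ 0)).card
        ≤ (TB.biUnion (fun q => (Finset.univ.filter fun lam => A lam q.1 ≠ 0) ×ˢ {q.2})).card :=
          Finset.card_le_card hsub
      _ ≤ ∑ q ∈ TB, ((Finset.univ.filter fun lam => A lam q.1 ≠ 0) ×ˢ ({q.2} : Finset (Lam d J))).card :=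
          Finset.card_biUnion_le
      _ ≤ ∑ _q ∈ TB, L := by
          apply Finset.sum_le_sum
          intro q _
          rw [Finset.card_product, Finset.card_singleton, mul_one]
          exact hA q.1
      _ = TB.card * L := by rw [Finset.sum_const, smul_eq_mul]
      _ ≤ TO.card * L := Nat.mul_le_mul_right L (Finset.card_le_card hTBsub)
      _ = L * TO.card := Nat.mul_comm _ _
  -- Step 2
  have hstep2 : TO.card ≤ ∑ jj' : Fin J × Fin J,
      (2^d - 1) * ((2^d - 1) * (pairFinset J δ (jj'.1 : ℕ) (jj'.2 : ℕ)).card ^ d) := by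
    have hfib : TO.card = ∑ jj' ∈ (Finset.univ : Finset (Fin J × Fin J)),
        (TO.filter (fun p => (p.1.1.1, p.2.1.1) = jj')).card :=
      Finset.card_eq_sum_card_fiberwise (fun p _ => Finset.mem_univ _)
    rw [hfib]
    apply Finset.sum_le_sum
    intro jj' _
    set Eset : Finset (Fin d → Bool) := Finset.univ.filter (fun e => e ≠ fun _ => false) with hE
    have hEcard : Eset.card = 2^d - 1 := by
      rw [hE, Finset.filter_ne', Finset.card_erase_of_mem (Finset.mem_univ _), Finset.card_univ]
      congr 1
      rw [Fintype.card_fun, Fintype.card_fin, Fintype.card_bool]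
    set piF := Fintype.piFinset (fun _ : Fin d => pairFinset J δ (jj'.1 : ℕ) (jj'.2 : ℕ)) with hpiF
    have hinj : (TO.filter (fun p => (p.1.1.1, p.2.1.1) = jj')).card ≤
        (Eset ×ˢ (Eset ×ˢ piF)).card := by
      refine Finset.card_le_card_of_injOn
        (fun p => (p.1.1.2.1, (p.2.1.2.1, fun i => (p.1.1.2.2 i, p.2.1.2.2 i)))) ?_ ?_
      · intro p hp
        rw [Finset.mem_coe, Finset.mem_filter] at hp
        obtain ⟨hpTO, hpfib⟩ := hp
        rw [hTO, Finset.mem_filter] at hpTO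
        have hOver := hpTO.2
        have hj1 : p.1.1.1 = jj'.1 := congrArg Prod.fst hpfib
        have hj2 : p.2.1.1 = jj'.2 := congrArg Prod.snd hpfib
        rw [Finset.mem_coe, Finset.mem_product]
        refine ⟨?_, ?_⟩
        · rw [hE, Finset.mem_filter]
          exact ⟨Finset.mem_univ _, p.1.2.1⟩
        rw [Finset.mem_product]
        refine ⟨?_, ?_⟩
        · rw [hE, Finset.mem_filter]
          exact ⟨Finset.mem_univ _, p.2.2.1⟩
        · rw [hpiF, Fintype.mem_piFinset]
          intro i
          rw [pairFinset, Finset.mem_filter]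
          refine ⟨Finset.mem_univ _, ⟨?_, ?_⟩, ?_, ?_⟩
          · rw [← hj1]; exact p.1.2.2 i
          · rw [← hj2]; exact p.2.2.2 i
          · rw [← hj1, ← hj2]; exact (hOver i).1
          · rw [← hj1, ← hj2]; exact (hOver i).2
      · intro p hp q hq heq
        simp only [Finset.mem_coe, Finset.mem_filter] at hp hq
        have hj1p : p.1.1.1 = jj'.1 := congrArg Prod.fst hp.2
        have hj2p : p.2.1.1 = jj'.2 := congrArg Prod.snd hp.2
        have hj1q : q.1.1.1 = jj'.1 := congrArg Prod.fst hq.2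
        have hj2q : q.2.1.1 = jj'.2 := congrArg Prod.snd hq.2
        simp only [Prod.mk.injEq] at heq
        obtain ⟨he1, he2, hl⟩ := heq
        have hl1 : ∀ i, p.1.1.2.2 i = q.1.1.2.2 i := fun i => (Prod.mk.injEq _ _ _ _ ▸ congrFun hl i).1
        have hl2 : ∀ i, p.2.1.2.2 i = q.2.1.2.2 i := fun i => (Prod.mk.injEq _ _ _ _ ▸ congrFun hl i).2
        have hfst : p.1 = q.1 := by
          apply Subtype.ext
          apply Prod.ext
          · rw [hj1p, hj1q]
          · apply Prod.ext
            · exact he1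
            · exact funext hl1
        have hsnd : p.2 = q.2 := by
          apply Subtype.ext
          apply Prod.ext
          · rw [hj2p, hj2q]
          · apply Prod.ext
            · exact he2
            · exact funext hl2
        exact Prod.ext hfst hsnd
    refine le_trans hinj ?_
    rw [Finset.card_product, Finset.card_product, hEcard, hpiF, Fintype.card_piFinset]
    rw [Finset.prod_const, Finset.card_univ, Fintype.card_fin]
  -- Step 3: real bound
  have hE1 : (1:ℕ) ≤ 2^d := Nat.one_le_two_pow
  have hEcast : (((2^d - 1 : ℕ)) : ℝ) = 2^d - 1 := by
    push_cast [Nat.cast_sub hE1]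
    ring
  have h2dR : (2:ℝ) ≤ 2^d := by
    calc (2:ℝ) = 2^1 := by norm_num
      _ ≤ 2^d := pow_le_pow_right₀ (by norm_num) hd
  have hpos2d : (0:ℝ) < 2^d - 1 := by linarith
  set M : ℕ := 2 * (2^d - 1) * 2^d * δ^d * J * 2^(d*J) with hM
  have hTOM : TO.card ≤ M := by
    have hcast : (TO.card : ℝ) ≤ ((M : ℕ) : ℝ) := by
      have h1 : (TO.card : ℝ) ≤ ∑ jj' : Fin J × Fin J,
          (((2^d - 1:ℕ)):ℝ) * ((((2^d - 1:ℕ)):ℝ) *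
            ((pairFinset J δ (jj'.1 : ℕ) (jj'.2 : ℕ)).card : ℝ) ^ d) := by
        calc (TO.card : ℝ) ≤ ((∑ jj' : Fin J × Fin J,
            (2^d - 1) * ((2^d - 1) * (pairFinset J δ (jj'.1 : ℕ) (jj'.2 : ℕ)).card ^ d) : ℕ) : ℝ) := by
              exact_mod_cast hstep2
          _ = _ := by push_cast; ring
      have h2 : ∀ jj' : Fin J × Fin J,
          (((2^d - 1:ℕ)):ℝ) * ((((2^d - 1:ℕ)):ℝ) *
            ((pairFinset J δ (jj'.1 : ℕ) (jj'.2 : ℕ)).card : ℝ) ^ d) ≤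
          (2^d - 1) * ((2^d - 1) * ((2 * δ * 2^J) ^ d * ff J (jj'.1 : ℕ) (jj'.2 : ℕ) ^ d)) := by
        intro jj'
        rw [hEcast]
        have hpc := pair_count J δ (jj'.1 : ℕ) (jj'.2 : ℕ) hδ jj'.1.isLt jj'.2.isLt
        have hffnn := ff_nonneg J (jj'.1 : ℕ) (jj'.2 : ℕ) jj'.1.isLt jj'.2.isLt
        have hpow : ((pairFinset J δ (jj'.1 : ℕ) (jj'.2 : ℕ)).card : ℝ) ^ d ≤
            (2 * δ * 2^J) ^ d * ff J (jj'.1 : ℕ) (jj'.2 : ℕ) ^ d := by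
          rw [← mul_pow]
          exact pow_le_pow_left₀ (by positivity) hpc d
        apply mul_le_mul_of_nonneg_left _ hpos2d.le
        exact mul_le_mul_of_nonneg_left hpow hpos2d.le
      have h3 : ∑ jj' : Fin J × Fin J, ff J (jj'.1 : ℕ) (jj'.2 : ℕ) ^ d ≤ 2 * J / (2^d - 1) := by
        rw [Fintype.sum_prod_type]
        have e1 : ∀ j : Fin J, ∑ j' : Fin J, ff J (j : ℕ) (j' : ℕ) ^ d =
            ∑ j' ∈ Finset.range J, ff J (j : ℕ) j' ^ d := fun j =>
          Fin.sum_univ_eq_sum_range (fun j' => ff J (j : ℕ) j' ^ d) J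
        calc ∑ j : Fin J, ∑ j' : Fin J, ff J (j : ℕ) (j' : ℕ) ^ d
            = ∑ j : Fin J, ∑ j' ∈ Finset.range J, ff J (j : ℕ) j' ^ d :=
              Finset.sum_congr rfl (fun j _ => e1 j)
          _ = ∑ j ∈ Finset.range J, ∑ j' ∈ Finset.range J, ff J j j' ^ d :=
              Fin.sum_univ_eq_sum_range (fun j => ∑ j' ∈ Finset.range J, ff J j j' ^ d) J
          _ ≤ 2 * J / (2^d - 1) := sum_ff_pow d J hd hJ
      calc (TO.card : ℝ)
          ≤ ∑ jj' : Fin J × Fin J, (((2^d - 1:ℕ)):ℝ) * ((((2^d - 1:ℕ)):ℝ) *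
              ((pairFinset J δ (jj'.1 : ℕ) (jj'.2 : ℕ)).card : ℝ) ^ d) := h1
        _ ≤ ∑ jj' : Fin J × Fin J, (2^d - 1) * ((2^d - 1) *
              ((2 * δ * 2^J) ^ d * ff J (jj'.1 : ℕ) (jj'.2 : ℕ) ^ d)) :=
            Finset.sum_le_sum (fun jj' _ => h2 jj')
        _ = (2^d - 1) * (2^d - 1) * (2 * δ * 2^J) ^ d *
              ∑ jj' : Fin J × Fin J, ff J (jj'.1 : ℕ) (jj'.2 : ℕ) ^ d := by
            rw [Finset.mul_sum]
            apply Finset.sum_congr rfl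
            intro jj' _
            ring
        _ ≤ (2^d - 1) * (2^d - 1) * (2 * δ * 2^J) ^ d * (2 * J / (2^d - 1)) := by
            apply mul_le_mul_of_nonneg_left h3 (by positivity)
        _ = ((M : ℕ) : ℝ) := by
            rw [hM]
            push_cast [Nat.cast_sub hE1]
            have e2 : ((2:ℝ) * δ * 2^J) ^ d = 2^d * δ^d * 2^(d*J) := by
              rw [mul_pow, mul_pow, ← pow_mul, Nat.mul_comm J d]
            rw [e2]
            field_simp
    exact_mod_cast hcast
  have part1 : (Finset.univ.filter (fun p : Lam d J × Lam d J => (A * B) p.1 p.2 ≠ 0)).card ≤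
      2 * (2 ^ d - 1) * 2 ^ d * δ ^ d * L * J * 2 ^ (d * J) := by
    calc (Finset.univ.filter (fun p : Lam d J × Lam d J => (A * B) p.1 p.2 ≠ 0)).card
        ≤ L * TO.card := hstep1
      _ ≤ L * M := Nat.mul_le_mul_left L hTOM
      _ = 2 * (2 ^ d - 1) * 2 ^ d * δ ^ d * L * J * 2 ^ (d * J) := by rw [hM]; ring
  refine ⟨part1, ?_⟩
  -- second form with logb
  have hlog : Real.logb 2 ((2 ^ (d * J) : ℕ) : ℝ) = (d * J : ℕ) := by
    push_cast
    rw [Real.logb_pow, Real.logb_self_eq_one (by norm_num)]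
    push_cast
    ring
  have hcast2 : ((2 * (2 ^ d - 1) * 2 ^ d * δ ^ d * L * J * 2 ^ (d * J) : ℕ) : ℝ) =
      2 * ((2:ℝ) ^ d - 1) * 2 ^ d / d * δ ^ d * L * ((2 ^ (d * J) : ℕ) : ℝ) *
        Real.logb 2 ((2 ^ (d * J) : ℕ) : ℝ) := by
    rw [hlog]
    push_cast [Nat.cast_sub hE1]
    have hdne : (d:ℝ) ≠ 0 := by
      have : (1:ℝ) ≤ (d:ℝ) := by exact_mod_cast hd
      linarith
    field_simp
  rw [← hcast2]
  exact_mod_cast part1
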